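/- Let d ≥ 2 be an integer, let 0 < r < d - 1 be a real number, and let m ≥ 1 be a real number. Then for every real x with 1 ≤ x ≤ m, min((m/x)^(d-1), m^r) · x ≤ m^(1 + r(d-2)/(d-1)). -/

import Mathlib

theorem stmt_11 (d : ℕ) (hd : 2 ≤ d) (r : ℝ) (hr0 : 0 < r) (hr : r < (d : ℝ) - 1)
    (m : ℝ) (hm : 1 ≤ m) :
    ∀ x : ℝ, 1 ≤ x → x ≤ m →
      min ((m / x) ^ ((d : ℝ) - 1)) (m ^ r) * x ≤ m ^ (1 + r * ((d : ℝ) - 2) / ((d : ℝ) - 1)) := by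
  intro x hx1 hxm
  have hm0 : (0:ℝ) < m := lt_of_lt_of_le one_pos hm
  have hx0 : (0:ℝ) < x := lt_of_lt_of_le one_pos hx1
  set e : ℝ := (d : ℝ) - 1 with he
  have he1 : (1:ℝ) ≤ e := by
    have : (2:ℝ) ≤ (d:ℝ) := by exact_mod_cast hd
    simp [he]; linarith
  have he0 : (0:ℝ) < e := lt_of_lt_of_le one_pos he1
  have hene : e ≠ 0 := ne_of_gt he0
  set c : ℝ := 1 - r / e with hc
  have hc0 : 0 < c := by
    have : r / e < 1 := (div_lt_one he0).2 hr
    simp [hc]; linarith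
  set x0 : ℝ := m ^ c with hx0def
  have hexp : 1 + r * ((d : ℝ) - 2) / ((d : ℝ) - 1) = r + c := by
    field_simp [hc, he]
    have h1 : (-1 + (d:ℝ)) ≠ 0 := by intro h0; apply hene; rw [he]; linarith
    rw [hc, he]
    field_simp
    linear_combination r * mul_inv_cancel₀ h1
  rcases le_total x x0 with h | h
  · calc min ((m / x) ^ e) (m ^ r) * x ≤ m ^ r * x := by
          gcongr; exact min_le_right _ _
    _ ≤ m ^ r * x0 := by gcongr
    _ = m ^ (r + c) := by rw [hx0def, ← Real.rpow_add hm0]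
    _ = m ^ (1 + r * ((d : ℝ) - 2) / ((d : ℝ) - 1)) := by rw [hexp]
  · have key : (m / x) ^ e * x = m ^ e * x ^ (1 - e) := by
      have hx1e : x ^ (1 - e) = x ^ (1:ℝ) / x ^ e := Real.rpow_sub hx0 1 e
      rw [Real.div_rpow hm0.le hx0.le, hx1e, Real.rpow_one]
      ring
    have hxpow : x ^ (1 - e) ≤ x0 ^ (1 - e) := by
      apply Real.rpow_le_rpow_of_nonpos _ h (by linarith)
      exact Real.rpow_pos_of_pos hm0 c
    calc min ((m / x) ^ e) (m ^ r) * x ≤ (m / x) ^ e * x := by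
          gcongr; exact min_le_left _ _
    _ = m ^ e * x ^ (1 - e) := key
    _ ≤ m ^ e * x0 ^ (1 - e) := by
          gcongr
    _ = m ^ (e + c * (1 - e)) := by
          rw [hx0def, ← Real.rpow_mul hm0.le, ← Real.rpow_add hm0]
    _ = m ^ (1 + r * ((d : ℝ) - 2) / ((d : ℝ) - 1)) := by
          congr 1
          rw [hexp, hc]
          field_simp
          ring
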